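/- There is a constant C>0, independent of ε, such that |F(J_ε)(0) − F(J_ε)(ξ) − |ξ|²| ≤ C(1+|ξ|²) for all ξ ∈ ℝⁿ and all ε>0, where F denotes the Fourier transform F(f)(ξ) = ∫_{ℝⁿ} e^{−i x·ξ} f(x) dx. -/

import Mathlib

open MeasureTheory Topology Filter Metric Set
open scoped ENNReal NNReal

noncomputable section

/-- `ℝⁿ` as a Euclidean space. -/
abbrev En (n : ℕ) := EuclideanSpace ℝ (Fin n)

/-- The radial kernel `J_ε(x) = ρ_ε(|x|)/|x|²` associated to a radial profile `ρε`. -/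
def Jker {n : ℕ} (ρε : ℝ → ℝ) (z : En n) : ℝ := ρε ‖z‖ / ‖z‖ ^ 2

/-- The constant `C_n = ∫_{S^{n-1}} |e₁ ⬝ σ|² dH^{n-1}(σ)`. -/
def sphereConst (n : ℕ) : ℝ :=
  if h : 0 < n then
    ∫ σ in Metric.sphere (0 : En n) 1,
      ((inner ℝ (EuclideanSpace.single (⟨0, h⟩ : Fin n) (1 : ℝ)) σ : ℝ)) ^ 2 ∂μH[(n : ℝ) - 1]
  else 0

/-- The standing assumptions on the family of mollifiers `ρ_ε` and the kernels
`J_ε(x) = ρ_ε(|x|)/|x|²`:  each `ρ_ε` is nonnegative, even, integrable, has normalized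
second moment `∫₀^∞ ρ_ε(r) r^{n-1} dr = 2/C_n`, vanishing tails as `ε ↘ 0`, and
`J_ε ∈ W^{1,1}(ℝⁿ)`. -/
def IsMollifierFamily (n : ℕ) (ρ : ℝ → ℝ → ℝ) : Prop :=
  (∀ ε : ℝ, 0 < ε → ∀ r : ℝ, 0 ≤ ρ ε r) ∧
  (∀ ε : ℝ, 0 < ε → ∀ r : ℝ, ρ ε (-r) = ρ ε r) ∧
  (∀ ε : ℝ, 0 < ε → Integrable (ρ ε)) ∧
  (∀ ε : ℝ, 0 < ε → (∫ r in Set.Ioi (0 : ℝ), ρ ε r * r ^ (n - 1)) = 2 / sphereConst n) ∧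
  (∀ δ : ℝ, 0 < δ →
    Tendsto (fun ε => ∫ r in Set.Ioi δ, ρ ε r * r ^ (n - 1)) (𝓝[>] (0 : ℝ)) (𝓝 0)) ∧
  (∀ ε : ℝ, 0 < ε → Integrable (Jker (ρ ε) : En n → ℝ) ∧
    (∀ᵐ x : En n, DifferentiableAt ℝ (Jker (ρ ε) : En n → ℝ) x) ∧
    Integrable (fun x : En n => ‖fderiv ℝ (Jker (ρ ε) : En n → ℝ) x‖))

/-- The Fourier transform with the convention `F f ξ = ∫_{ℝⁿ} e^{-i x·ξ} f(x) dx`. -/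
def fourierF {n : ℕ} (f : En n → ℝ) (ξ : En n) : ℂ :=
  ∫ x : En n, Complex.exp (-Complex.I * ((inner ℝ x ξ : ℝ) : ℂ)) * (f x : ℂ)

/-! ### Auxiliary lemmas -/

abbrev Euc (m : ℕ) := EuclideanSpace ℝ (Fin m)

lemma euc_norm_sq {m : ℕ} (x : Euc m) : ‖x‖ ^ 2 = ∑ i, x i ^ 2 := by
  rw [EuclideanSpace.norm_eq, Real.sq_sqrt (by positivity)]
  simp [Real.norm_eq_abs, sq_abs]

lemma hM_pi_eq (m : ℕ) : (μH[(m : ℝ)] : Measure (Fin m → ℝ)) = volume := by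
  have := hausdorffMeasure_pi_real (ι := Fin m)
  simpa using this

lemma hM_ball_lt_top (m : ℕ) (R : ℝ) :
    μH[(m : ℝ)] (closedBall (0 : Euc m) R) < ∞ := by
  set e := WithLp.equiv 2 (Fin m → ℝ)
  have hanti : AntilipschitzWith _ e := PiLp.antilipschitzWith_ofLp 2 (fun _ : Fin m => ℝ)
  have h1 : μH[(m:ℝ)] (closedBall (0 : Euc m) R) ≤ _ * μH[(m:ℝ)] (e '' closedBall 0 R) :=
    hanti.le_hausdorffMeasure_image (by positivity) _
  have h2 : e '' closedBall (0 : Euc m) R ⊆ closedBall (0 : Fin m → ℝ) R := by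
    rintro y ⟨x, hx, rfl⟩
    have h3 : ‖e x‖ ≤ ‖x‖ := by
      have h := (PiLp.lipschitzWith_ofLp 2 (fun _ : Fin m => ℝ)).dist_le_mul x 0
      simp at h; exact h
    rw [mem_closedBall, dist_zero_right] at hx ⊢
    exact h3.trans hx
  calc μH[(m:ℝ)] (closedBall (0 : Euc m) R)
      ≤ _ * μH[(m:ℝ)] (e '' closedBall 0 R) := h1
    _ ≤ _ * μH[(m:ℝ)] (closedBall (0 : Fin m → ℝ) R) := mul_le_mul_right (measure_mono h2) _
    _ < ∞ := by
        rw [hM_pi_eq]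
        exact ENNReal.mul_lt_top (ENNReal.rpow_lt_top_of_nonneg (by positivity) ENNReal.coe_ne_top) measure_closedBall_lt_top

lemma hM_ball_pos (m : ℕ) {R : ℝ} (hR : 0 < R) :
    0 < μH[(m : ℝ)] (closedBall (0 : Euc m) R) := by
  set e := WithLp.equiv 2 (Fin m → ℝ)
  have h1 : μH[(m:ℝ)] (e '' closedBall (0 : Euc m) R)
      ≤ (1 : ℝ≥0) ^ (m : ℝ) * μH[(m:ℝ)] (closedBall (0 : Euc m) R) :=
    (PiLp.lipschitzWith_ofLp 2 (fun _ : Fin m => ℝ)).hausdorffMeasure_image_le (by positivity) _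
  have hopen : IsOpen (e '' ball (0 : Euc m) R) := by
    rw [Equiv.image_eq_preimage_symm]
    exact isOpen_ball.preimage (PiLp.continuous_toLp 2 (fun _ : Fin m => ℝ))
  have hpos : 0 < μH[(m:ℝ)] (e '' ball (0 : Euc m) R) := by
    rw [hM_pi_eq]
    exact hopen.measure_pos volume ⟨e 0, mem_image_of_mem _ (mem_ball_self hR)⟩
  have h2 : μH[(m:ℝ)] (e '' ball (0 : Euc m) R) ≤ μH[(m:ℝ)] (e '' closedBall (0 : Euc m) R) :=
    measure_mono (image_mono ball_subset_closedBall)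
  have := (hpos.trans_le (h2.trans h1))
  simpa using this

/-- identity bundling `Fin m → ℝ` into Euclidean space -/
def eN (m : ℕ) : (Fin m → ℝ) ≃ Euc m := (WithLp.equiv 2 (Fin m → ℝ)).symm

lemma eN_apply {m : ℕ} (f : Fin m → ℝ) (j : Fin m) : eN m f j = f j := rfl

lemma euc_dist_sq {m : ℕ} (x y : Euc m) : dist x y ^ 2 = ∑ i, (x i - y i) ^ 2 := by
  rw [EuclideanSpace.dist_eq, Real.sq_sqrt (by positivity)]
  simp [Real.dist_eq, sq_abs]

-- L3: insertNth with fixed value is 1-Lipschitz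
lemma lipschitz_insertNth (m : ℕ) (i : Fin (m + 1)) (c : ℝ) :
    LipschitzWith 1 (fun y : Euc m => eN (m+1) (i.insertNth c (fun j => y j))) := by
  apply LipschitzWith.of_dist_le_mul
  intro y z
  rw [NNReal.coe_one, one_mul]
  have h1 : dist (eN (m+1) (i.insertNth c (fun j => y j)))
      (eN (m+1) (i.insertNth c (fun j => z j))) ^ 2 = dist y z ^ 2 := by
    rw [euc_dist_sq, euc_dist_sq, Fin.sum_univ_succAbove _ i]
    simp [eN_apply, Fin.insertNth_apply_same, Fin.insertNth_apply_succAbove]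
  nlinarith [dist_nonneg (x := y) (y := z), dist_nonneg (x := eN (m+1) (i.insertNth c (fun j => y j))) (y := eN (m+1) (i.insertNth c (fun j => z j)))]

-- L4: dropping the first coordinate is 1-Lipschitz
lemma lipschitz_tail (m : ℕ) :
    LipschitzWith 1 (fun x : Euc (m + 1) => eN m (fun j => x j.succ)) := by
  apply LipschitzWith.of_dist_le_mul
  intro x y
  rw [NNReal.coe_one, one_mul]
  have h1 : dist (eN m (fun j => x j.succ)) (eN m (fun j => y j.succ)) ^ 2
      ≤ dist x y ^ 2 := by
    rw [euc_dist_sq, euc_dist_sq, Fin.sum_univ_succ (f := fun i => (x i - y i) ^ 2)]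
    have h0 : (0:ℝ) ≤ (x 0 - y 0)^2 := by positivity
    have : ∑ j : Fin m, (eN m (fun j => x j.succ) j - eN m (fun j => y j.succ) j) ^ 2
        = ∑ j : Fin m, (x j.succ - y j.succ) ^ 2 := by simp [eN_apply]
    rw [this]; linarith
  nlinarith [dist_nonneg (x := x) (y := y),
    dist_nonneg (x := eN m (fun j => x j.succ)) (y := eN m (fun j => y j.succ))]

-- L5: normalization is 2-Lipschitz away from the unit ball
lemma lipschitzOnWith_normalize (E : Type*) [NormedAddCommGroup E] [NormedSpace ℝ E] :
    LipschitzOnWith 2 (fun x : E => ‖x‖⁻¹ • x) {x : E | 1 ≤ ‖x‖} := by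
  apply LipschitzOnWith.of_dist_le_mul
  intro x hx y hy
  simp only [mem_setOf_eq] at hx hy
  have hx0 : (0:ℝ) < ‖x‖ := lt_of_lt_of_le one_pos hx
  have hy0 : (0:ℝ) < ‖y‖ := lt_of_lt_of_le one_pos hy
  rw [dist_eq_norm, dist_eq_norm]
  have key : ‖x‖⁻¹ • x - ‖y‖⁻¹ • y = ‖x‖⁻¹ • (x - y) + (‖x‖⁻¹ - ‖y‖⁻¹) • y := by
    rw [smul_sub, sub_smul]; abel
  rw [key]
  have h1 : ‖‖x‖⁻¹ • (x - y)‖ ≤ ‖x - y‖ := by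
    rw [norm_smul, norm_inv, norm_norm]
    calc ‖x‖⁻¹ * ‖x - y‖ ≤ 1 * ‖x - y‖ :=
          mul_le_mul_of_nonneg_right (inv_le_one_of_one_le₀ hx) (norm_nonneg _)
      _ = ‖x - y‖ := one_mul _
  have h2 : ‖(‖x‖⁻¹ - ‖y‖⁻¹) • y‖ ≤ ‖x - y‖ := by
    rw [norm_smul, Real.norm_eq_abs]
    have habs : |‖x‖⁻¹ - ‖y‖⁻¹| = |‖y‖ - ‖x‖| / (‖x‖ * ‖y‖) := by
      rw [inv_sub_inv hx0.ne' hy0.ne', abs_div, abs_of_pos (mul_pos hx0 hy0)]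
    rw [habs]
    have hxy : |‖y‖ - ‖x‖| ≤ ‖x - y‖ := by
      rw [abs_sub_comm]; exact abs_norm_sub_norm_le x y
    calc |‖y‖ - ‖x‖| / (‖x‖ * ‖y‖) * ‖y‖ = |‖y‖ - ‖x‖| / ‖x‖ := by
          field_simp
      _ ≤ |‖y‖ - ‖x‖| := div_le_self (abs_nonneg _) hx
      _ ≤ ‖x - y‖ := hxy
  calc ‖‖x‖⁻¹ • (x - y) + (‖x‖⁻¹ - ‖y‖⁻¹) • y‖ ≤ ‖‖x‖⁻¹ • (x - y)‖ + ‖(‖x‖⁻¹ - ‖y‖⁻¹) • y‖ :=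
        norm_add_le _ _
    _ ≤ ‖x - y‖ + ‖x - y‖ := add_le_add h1 h2
    _ = (2:ℝ≥0) * ‖x - y‖ := by push_cast; ring

/-- a flat face of the cube -/
def face (m : ℕ) (i : Fin (m + 1)) (c : ℝ) : Set (Euc (m + 1)) :=
  {x | x i = c ∧ ∀ j, |x j| ≤ 1}

lemma coord_sq_le_norm_sq {m : ℕ} (x : Euc m) (i : Fin m) : x i ^ 2 ≤ ‖x‖ ^ 2 := by
  rw [euc_norm_sq]
  exact Finset.single_le_sum (f := fun j => x j ^ 2) (fun j _ => by positivity) (Finset.mem_univ i)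

lemma face_subset_norm_ge {m : ℕ} {i : Fin (m + 1)} {c : ℝ} (hc : |c| = 1) :
    face m i c ⊆ {x : Euc (m+1) | 1 ≤ ‖x‖} := by
  intro x hx
  have h1 : x i ^ 2 ≤ ‖x‖ ^ 2 := coord_sq_le_norm_sq x i
  have h2 : x i ^ 2 = 1 := by rw [← sq_abs, hx.1, hc]; norm_num
  have := norm_nonneg x
  simp only [mem_setOf_eq]
  nlinarith

lemma face_subset_image (m : ℕ) (i : Fin (m + 1)) (c : ℝ) :
    face m i c ⊆ (fun y : Euc m => eN (m+1) (i.insertNth c (fun j => y j))) ''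
      (closedBall 0 (m+1)) := by
  rintro x ⟨hxi, hxj⟩
  refine ⟨eN m (i.removeNth (fun j => x j)), ?_, ?_⟩
  · rw [mem_closedBall, dist_zero_right]
    have h1 : ‖eN m (i.removeNth (fun j => x j))‖ ^ 2 ≤ (m:ℝ) := by
      rw [euc_norm_sq]
      calc ∑ j : Fin m, (eN m (i.removeNth (fun j => x j)) j) ^ 2
          ≤ ∑ _j : Fin m, (1:ℝ) := by
            apply Finset.sum_le_sum
            intro j _
            rw [eN_apply]
            have := hxj (i.succAbove j)
            calc (i.removeNth (fun j => x j) j)^2 = |x (i.succAbove j)|^2 := by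
                  rw [sq_abs]; rfl
              _ ≤ 1 := by nlinarith [abs_nonneg (x (i.succAbove j))]
        _ = (m:ℝ) := by simp
    have h2 := norm_nonneg (eN m (i.removeNth (fun j => x j)))
    nlinarith [Nat.cast_nonneg (α := ℝ) m]
  · show eN (m+1) (i.insertNth c fun j => (eN m (i.removeNth fun j => x j)) j) = x
    have heq : (fun j => (eN m (i.removeNth fun j => x j)) j) = i.removeNth (fun j => x j) := by
      funext j; rw [eN_apply]
    rw [heq]
    have h3 : i.insertNth c (i.removeNth fun j => x j)
        = i.insertNth ((fun j => x j) i) (i.removeNth fun j => x j) := by rw [← hxi]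
    rw [h3, Fin.insertNth_self_removeNth]
    rfl

lemma sphere_subset_image (m : ℕ) :
    Metric.sphere (0 : Euc (m+1)) 1 ⊆ (fun x : Euc (m+1) => ‖x‖⁻¹ • x) ''
      (⋃ i : Fin (m+1), ⋃ c ∈ ({1, -1} : Set ℝ), face m i c) := by
  intro σ hσ
  rw [mem_sphere_zero_iff_norm] at hσ
  -- pick a coordinate of maximal absolute value
  obtain ⟨i, _, hi⟩ := Finset.exists_max_image Finset.univ (fun j => |σ j|) ⟨0, Finset.mem_univ 0⟩
  have hi0 : 0 < |σ i| := by
    rcases eq_or_lt_of_le (abs_nonneg (σ i)) with h | h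
    · exfalso
      have : σ = 0 := by
        ext j
        have := hi j (Finset.mem_univ j)
        have := abs_nonneg (σ j)
        have hj : |σ j| = 0 := le_antisymm (by rw [← h] at *; linarith) (abs_nonneg _)
        simpa [abs_eq_zero] using hj
      rw [this] at hσ; simp at hσ
    · exact h
  set M := |σ i| with hM
  set x : Euc (m+1) := M⁻¹ • σ with hx
  have hMnorm : ‖x‖ = M⁻¹ := by
    rw [hx, norm_smul, hσ, mul_one, Real.norm_eq_abs, abs_inv, abs_abs]
  have hMle : M ≤ 1 := by
    have h1 : M ^ 2 ≤ ‖σ‖ ^ 2 := coord_sq_le_norm_sq σ i |>.trans_eq' (by rw [hM, sq_abs])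
    rw [hσ] at h1; nlinarith
  have hσine : σ i ≠ 0 := by
    intro h0; rw [hM, h0] at hi0; simp at hi0
  have hc : x i = 1 ∨ x i = -1 := by
    have hxiv : x i = M⁻¹ * σ i := rfl
    rcases hσine.lt_or_gt with h | h
    · right
      rw [hxiv, hM, abs_of_neg h]
      field_simp
    · left
      rw [hxiv, hM, abs_of_pos h]
      exact inv_mul_cancel₀ hσine
  refine ⟨x, ?_, ?_⟩
  · simp only [mem_iUnion]
    refine ⟨i, x i, ?_, ?_, ?_⟩
    · rcases hc with h | h <;> simp [h]
    · rfl
    · intro j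
      have h1 : x j = M⁻¹ * σ j := rfl
      rw [h1, abs_mul, abs_inv, abs_abs]
      rw [inv_mul_le_iff₀ hi0, mul_one]
      exact hi j (Finset.mem_univ j)
  · show ‖x‖⁻¹ • x = σ
    rw [hMnorm, inv_inv, hx, smul_smul]
    rw [mul_inv_cancel₀ (by positivity), one_smul]

lemma sphere_hM_lt_top (m : ℕ) :
    μH[(m : ℝ)] (Metric.sphere (0 : Euc (m+1)) 1) < ∞ := by
  set U := ⋃ i : Fin (m+1), ⋃ c ∈ ({1, -1} : Set ℝ), face m i c with hU
  have hU_sub : U ⊆ {x : Euc (m+1) | 1 ≤ ‖x‖} := by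
    rintro x hx
    simp only [hU, mem_iUnion] at hx
    obtain ⟨i, c, hc, hxc⟩ := hx
    have : |c| = 1 := by
      rcases hc with h | h
      · rw [h]; norm_num
      · rw [mem_singleton_iff] at h; rw [h]; norm_num
    exact face_subset_norm_ge this hxc
  have h1 : μH[(m:ℝ)] (Metric.sphere (0 : Euc (m+1)) 1)
      ≤ μH[(m:ℝ)] ((fun x : Euc (m+1) => ‖x‖⁻¹ • x) '' U) :=
    measure_mono (sphere_subset_image m)
  have h2 : μH[(m:ℝ)] ((fun x : Euc (m+1) => ‖x‖⁻¹ • x) '' U)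
      ≤ (2:ℝ≥0) ^ (m:ℝ) * μH[(m:ℝ)] U :=
    ((lipschitzOnWith_normalize (Euc (m+1))).mono hU_sub).hausdorffMeasure_image_le
      (by positivity)
  have hface : ∀ (i : Fin (m+1)) (c : ℝ), μH[(m:ℝ)] (face m i c) < ∞ := by
    intro i c
    calc μH[(m:ℝ)] (face m i c)
        ≤ μH[(m:ℝ)] ((fun y : Euc m => eN (m+1) (i.insertNth c (fun j => y j))) ''
            (closedBall 0 (m+1))) := measure_mono (face_subset_image m i c)
      _ ≤ (1:ℝ≥0) ^ (m:ℝ) * μH[(m:ℝ)] (closedBall (0 : Euc m) (m+1)) :=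
          (lipschitz_insertNth m i c).hausdorffMeasure_image_le (by positivity) _
      _ < ∞ := by
          simp only [ENNReal.coe_one, ENNReal.one_rpow, one_mul]
          exact hM_ball_lt_top m _
  have hU_lt : μH[(m:ℝ)] U < ∞ := by
    calc μH[(m:ℝ)] U ≤ ∑ i : Fin (m+1), μH[(m:ℝ)] (⋃ c ∈ ({1,-1} : Set ℝ), face m i c) := by
          rw [hU]
          exact (measure_iUnion_fintype_le _ _)
      _ < ∞ := by
          apply ENNReal.sum_lt_top.2
          intro i _
          have : (⋃ c ∈ ({1,-1} : Set ℝ), face m i c) = face m i 1 ∪ face m i (-1) := by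
            simp [Set.biUnion_pair]
          rw [this]
          exact lt_of_le_of_lt (measure_union_le _ _)
            (ENNReal.add_lt_top.2 ⟨hface i 1, hface i (-1)⟩)
  calc μH[(m:ℝ)] (Metric.sphere (0 : Euc (m+1)) 1)
      ≤ (2:ℝ≥0) ^ (m:ℝ) * μH[(m:ℝ)] U := h1.trans h2
    _ < ∞ := ENNReal.mul_lt_top (ENNReal.rpow_lt_top_of_nonneg (by positivity)
        ENNReal.coe_ne_top) hU_lt

/-- spherical cap -/
def cap (m : ℕ) : Set (Euc (m+1)) := {x | ‖x‖ = 1 ∧ 1/2 ≤ x 0}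

lemma cap_subset_sphere (m : ℕ) : cap m ⊆ Metric.sphere (0 : Euc (m+1)) 1 := by
  intro x hx
  rw [mem_sphere_zero_iff_norm]
  exact hx.1

lemma cap_hM_pos (m : ℕ) : 0 < μH[(m : ℝ)] (cap m) := by
  have himg : closedBall (0 : Euc m) 2⁻¹
      ⊆ (fun x : Euc (m+1) => eN m (fun j => x j.succ)) '' cap m := by
    intro y hy
    rw [mem_closedBall, dist_zero_right] at hy
    have hy2 : ‖y‖^2 ≤ 4⁻¹ := by nlinarith [norm_nonneg y]
    set t := Real.sqrt (1 - ‖y‖^2) with ht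
    have ht2 : t^2 = 1 - ‖y‖^2 := Real.sq_sqrt (by nlinarith)
    have htpos : 1/2 ≤ t := by nlinarith [Real.sqrt_nonneg (1 - ‖y‖^2)]
    set σ : Euc (m+1) := eN (m+1) (Fin.cons t (fun j => y j)) with hσ
    have hσ0 : σ 0 = t := by rw [hσ, eN_apply, Fin.cons_zero]
    have hσs : ∀ j : Fin m, σ j.succ = y j := by
      intro j; rw [hσ, eN_apply, Fin.cons_succ]
    have hσnorm : ‖σ‖ = 1 := by
      have h1 : ‖σ‖^2 = 1 := by
        rw [euc_norm_sq, Fin.sum_univ_succ]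
        have : ∑ j : Fin m, σ j.succ ^ 2 = ∑ j : Fin m, y j ^ 2 := by
          apply Finset.sum_congr rfl; intro j _; rw [hσs j]
        rw [hσ0, this, ← euc_norm_sq]
        linarith [ht2]
      nlinarith [norm_nonneg σ]
    refine ⟨σ, ⟨hσnorm, by rw [hσ0]; exact htpos⟩, ?_⟩
    show eN m (fun j => σ j.succ) = y
    ext j
    rw [eN_apply, hσs j]
  have h1 : μH[(m:ℝ)] (closedBall (0 : Euc m) 2⁻¹)
      ≤ μH[(m:ℝ)] ((fun x : Euc (m+1) => eN m (fun j => x j.succ)) '' cap m) :=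
    measure_mono himg
  have h2 : μH[(m:ℝ)] ((fun x : Euc (m+1) => eN m (fun j => x j.succ)) '' cap m)
      ≤ (1:ℝ≥0) ^ (m:ℝ) * μH[(m:ℝ)] (cap m) :=
    (lipschitz_tail m).hausdorffMeasure_image_le (by positivity) _
  have := (hM_ball_pos m (by norm_num : (0:ℝ) < 2⁻¹)).trans_le (h1.trans h2)
  simpa using this


lemma sphereConst_pos (n : ℕ) (hn : 0 < n) : 0 < sphereConst n := by
  obtain ⟨m, rfl⟩ : ∃ m, n = m + 1 := ⟨n - 1, (Nat.succ_pred_eq_of_pos hn).symm⟩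
  rw [sphereConst, dif_pos hn]
  have hd : ((m + 1 : ℕ) : ℝ) - 1 = (m : ℝ) := by push_cast; ring
  rw [hd]
  have hμ : μH[(m:ℝ)] (Metric.sphere (0 : En (m+1)) 1) < ∞ := sphere_hM_lt_top m
  have hzero : (⟨0, hn⟩ : Fin (m+1)) = 0 := rfl
  have hf_eq : ∀ σ : En (m+1),
      ((inner ℝ (EuclideanSpace.single (⟨0, hn⟩ : Fin (m+1)) (1 : ℝ)) σ : ℝ)) ^ 2 = σ 0 ^ 2 := by
    intro σ
    rw [EuclideanSpace.inner_single_left, hzero]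
    simp
  have hsm : MeasurableSet (Metric.sphere (0 : En (m+1)) 1) :=
    Metric.isClosed_sphere.measurableSet
  have hcapm : MeasurableSet (cap m) := by
    have : IsClosed (cap m) := by
      apply IsClosed.inter
      · exact isClosed_eq continuous_norm continuous_const
      · exact isClosed_le continuous_const
          ((continuous_apply (0 : Fin (m+1))).comp (PiLp.continuous_ofLp 2 _))
    exact this.measurableSet
  have hcap_sub := cap_subset_sphere m
  have hcap_fin : μH[(m:ℝ)] (cap m) ≠ ∞ := ((measure_mono hcap_sub).trans_lt hμ).ne
  -- integrability on the sphere
  have hcont : Continuous fun σ : En (m+1) => σ 0 ^ 2 :=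
    (((continuous_apply (0 : Fin (m+1))).comp (PiLp.continuous_ofLp 2 _))).pow 2
  have hInt : IntegrableOn (fun σ : En (m+1) => σ 0 ^ 2)
      (Metric.sphere (0 : En (m+1)) 1) μH[(m:ℝ)] := by
    refine Integrable.mono' (g := fun _ => (1:ℝ)) ?_ hcont.aestronglyMeasurable ?_
    · apply integrable_const_iff.2
      right
      exact isFiniteMeasure_restrict.mpr hμ.ne
    · filter_upwards [ae_restrict_mem hsm] with σ hσ
      rw [mem_sphere_zero_iff_norm] at hσ
      rw [Real.norm_eq_abs, abs_of_nonneg (by positivity)]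
      have h1 := coord_sq_le_norm_sq σ 0
      rw [hσ] at h1; simpa using h1
  have step1 : (1/4 : ℝ) * (μH[(m:ℝ)] (cap m)).toReal
      ≤ ∫ σ in cap m, σ 0 ^ 2 ∂μH[(m:ℝ)] := by
    apply setIntegral_ge_of_const_le_real hcapm hcap_fin
    · intro x hx
      have := hx.2
      nlinarith
    · exact hInt.mono_set hcap_sub
  have step2 : ∫ σ in cap m, σ 0 ^ 2 ∂μH[(m:ℝ)]
      ≤ ∫ σ in Metric.sphere (0 : En (m+1)) 1, σ 0 ^ 2 ∂μH[(m:ℝ)] := by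
    apply setIntegral_mono_set hInt
    · filter_upwards with σ using by positivity
    · exact HasSubset.Subset.eventuallyLE hcap_sub
  have hpos : 0 < (μH[(m:ℝ)] (cap m)).toReal :=
    ENNReal.toReal_pos (cap_hM_pos m).ne' hcap_fin
  have : (0:ℝ) < ∫ σ in Metric.sphere (0 : En (m+1)) 1, σ 0 ^ 2 ∂μH[(m:ℝ)] := by
    calc (0:ℝ) < (1/4 : ℝ) * (μH[(m:ℝ)] (cap m)).toReal := by positivity
      _ ≤ _ := step1.trans step2
  calc (0:ℝ) < ∫ σ in Metric.sphere (0 : En (m+1)) 1, σ 0 ^ 2 ∂μH[(m:ℝ)] := this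
    _ = _ := by
        apply setIntegral_congr_fun hsm
        intro σ _
        exact (hf_eq σ).symm


lemma nontrivial_En (n : ℕ) (hn : 0 < n) : Nontrivial (En n) := by
  refine ⟨⟨EuclideanSpace.single (⟨0, hn⟩ : Fin n) (1 : ℝ), 0, fun h => ?_⟩⟩
  have := congrFun (congrArg (fun x : En n => (x : Fin n → ℝ)) h) ⟨0, hn⟩
  simp [EuclideanSpace.single_apply] at this

lemma integrable_fun_norm_En (n : ℕ) (hn : 0 < n) {f : ℝ → ℝ}
    (hf : IntegrableOn (fun r => f r * r ^ (n - 1)) (Set.Ioi (0 : ℝ))) :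
    Integrable (fun x : En n => f ‖x‖) := by
  haveI : Nontrivial (En n) := nontrivial_En n hn
  set μ : Measure (En n) := volume with hμ
  -- Step 0 : integrability on `(0, ∞)` with density `r ^ (n-1)`
  have h0 : Integrable (fun r : Set.Ioi (0:ℝ) => f r) (Measure.volumeIoiPow (n - 1)) := by
    rw [Measure.volumeIoiPow]
    rw [integrable_withDensity_iff (by measurability) (by
      filter_upwards with r using ENNReal.ofReal_lt_top)]
    have heq : (fun r : Set.Ioi (0:ℝ) => f r * (ENNReal.ofReal (r.1 ^ (n-1))).toReal)
        = (fun s : ℝ => f s * s ^ (n - 1)) ∘ Subtype.val := by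
      funext r
      simp only [Function.comp_apply]
      rw [ENNReal.toReal_ofReal (pow_nonneg (le_of_lt r.2) _)]
    rw [heq]
    rw [← (MeasurableEmbedding.subtype_coe measurableSet_Ioi).integrable_map_iff,
      map_comap_subtype_coe measurableSet_Ioi]
    exact hf
  -- Step 1 : integrability on the product sphere × (0, ∞)
  have hP : Integrable (fun p : sphere (0 : En n) 1 × Set.Ioi (0:ℝ) => f p.2)
      (μ.toSphere.prod (Measure.volumeIoiPow (Module.finrank ℝ (En n) - 1))) := by
    rw [finrank_euclideanSpace_fin]
    have hmap : (μ.toSphere.prod (Measure.volumeIoiPow (n - 1))).map Prod.snd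
        = (μ.toSphere Set.univ) • (Measure.volumeIoiPow (n - 1)) := Measure.map_snd_prod
    have hint : Integrable (fun r : Set.Ioi (0:ℝ) => f r)
        ((μ.toSphere Set.univ) • (Measure.volumeIoiPow (n - 1))) :=
      h0.smul_measure (measure_ne_top _ _)
    have hsm : AEStronglyMeasurable (fun r : Set.Ioi (0:ℝ) => f r)
        ((μ.toSphere.prod (Measure.volumeIoiPow (n - 1))).map Prod.snd) := by
      rw [hmap]; exact hint.aestronglyMeasurable
    exact (integrable_map_measure hsm measurable_snd.aemeasurable).1 (by rw [hmap]; exact hint)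
  -- Step 2 : transfer along the measure-preserving homeomorphism
  have h2 : Integrable (fun x : ({0}ᶜ : Set (En n)) => f ‖x.1‖) (μ.comap Subtype.val) := by
    have h := (μ.measurePreserving_homeomorphUnitSphereProd.integrable_comp_emb
      (Homeomorph.measurableEmbedding _)).2 hP
    convert h using 1; funext x; simp [Function.comp_def]
  -- Step 3 : back to the full space
  have h3 : Integrable (fun x : En n => f ‖x‖) (μ.restrict {0}ᶜ) := by
    rw [← map_comap_subtype_coe (measurableSet_singleton (0 : En n)).compl]
    exact ((MeasurableEmbedding.subtype_coe
      (measurableSet_singleton (0 : En n)).compl).integrable_map_iff).2 h2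
  rwa [restrict_compl_singleton] at h3


/-- Uniform bound `|F(J_ε)(0) - F(J_ε)(ξ) - |ξ|²| ≤ C (1 + |ξ|²)`. -/
theorem fourier_kernel_uniform_bound
    (n : ℕ) (hn : 0 < n) (ρ : ℝ → ℝ → ℝ) (hρ : IsMollifierFamily n ρ) :
    ∃ C : ℝ, 0 < C ∧ ∀ ε : ℝ, 0 < ε → ∀ ξ : En n,
      ‖fourierF (Jker (ρ ε)) (0 : En n) - fourierF (Jker (ρ ε)) ξ - ((‖ξ‖ ^ 2 : ℝ) : ℂ)‖
        ≤ C * (1 + ‖ξ‖ ^ 2) := by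
  obtain ⟨h_nn, h_even, h_int, h_mom, h_tail, h_J⟩ := hρ
  have hC : 0 < sphereConst n := sphereConst_pos n hn
  haveI : Nontrivial (En n) := nontrivial_En n hn
  set K : ℝ := n * (volume (ball (0 : En n) 1)).toReal * (2 / sphereConst n) with hKdef
  have hK0 : 0 ≤ K := by
    apply mul_nonneg (mul_nonneg (Nat.cast_nonneg n) ENNReal.toReal_nonneg)
    positivity
  refine ⟨K / 2 + 1, by positivity, ?_⟩
  intro ε hε ξ
  set J : En n → ℝ := Jker (ρ ε) with hJdef
  have hJint : Integrable J := (h_J ε hε).1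
  have hJ0 : ∀ x, 0 ≤ J x := fun x => div_nonneg (h_nn ε hε _) (by positivity)
  have hJeven : ∀ x, J (-x) = J x := by
    intro x; show ρ ε ‖-x‖ / ‖-x‖ ^ 2 = ρ ε ‖x‖ / ‖x‖ ^ 2; rw [norm_neg]
  have hmom := h_mom ε hε
  have hrad : IntegrableOn (fun r => ρ ε r * r ^ (n - 1)) (Set.Ioi (0:ℝ)) := by
    by_contra h
    rw [integral_undef h] at hmom
    have h2 : (0:ℝ) < 2 / sphereConst n := by positivity
    linarith [hmom ▸ h2]
  have hρnorm_int : Integrable (fun x : En n => ρ ε ‖x‖) := integrable_fun_norm_En n hn hrad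
  -- value of the radial integral
  have hval : (∫ x : En n, ρ ε ‖x‖) = K := by
    rw [integral_fun_norm_addHaar (volume : Measure (En n)) (ρ ε)]
    simp only [finrank_euclideanSpace_fin, smul_eq_mul, nsmul_eq_mul, measureReal_def]
    have : (∫ y in Set.Ioi (0:ℝ), y ^ (n-1) * ρ ε y) = 2 / sphereConst n := by
      rw [← hmom]
      apply setIntegral_congr_fun measurableSet_Ioi
      intro y _; ring
    rw [this, hKdef]
    ring
  -- trigonometric integrands
  have hcont_inner : Continuous fun x : En n => (inner ℝ x ξ : ℝ) :=
    continuous_id.inner continuous_const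
  have hAESM_cos : AEStronglyMeasurable (fun x : En n => Real.cos (inner ℝ x ξ) * J x) volume :=
    ((Real.continuous_cos.comp hcont_inner).aestronglyMeasurable).mul hJint.aestronglyMeasurable
  have hAESM_sin : AEStronglyMeasurable (fun x : En n => Real.sin (inner ℝ x ξ) * J x) volume :=
    ((Real.continuous_sin.comp hcont_inner).aestronglyMeasurable).mul hJint.aestronglyMeasurable
  have hcosJ_int : Integrable (fun x : En n => Real.cos (inner ℝ x ξ) * J x) := by
    apply hJint.mono' hAESM_cos
    filter_upwards with x
    rw [Real.norm_eq_abs, abs_mul]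
    calc |Real.cos (inner ℝ x ξ)| * |J x| ≤ 1 * |J x| :=
          mul_le_mul_of_nonneg_right (Real.abs_cos_le_one _) (abs_nonneg _)
      _ = J x := by rw [one_mul, abs_of_nonneg (hJ0 x)]
  have hsinJ_int : Integrable (fun x : En n => Real.sin (inner ℝ x ξ) * J x) := by
    apply hJint.mono' hAESM_sin
    filter_upwards with x
    rw [Real.norm_eq_abs, abs_mul]
    calc |Real.sin (inner ℝ x ξ)| * |J x| ≤ 1 * |J x| :=
          mul_le_mul_of_nonneg_right (Real.abs_sin_le_one _) (abs_nonneg _)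
      _ = J x := by rw [one_mul, abs_of_nonneg (hJ0 x)]
  have h1cosJ_int : Integrable (fun x : En n => (1 - Real.cos (inner ℝ x ξ)) * J x) := by
    have : (fun x : En n => (1 - Real.cos (inner ℝ x ξ)) * J x)
        = fun x : En n => J x - Real.cos (inner ℝ x ξ) * J x := by
      funext x; ring
    rw [this]
    exact hJint.sub hcosJ_int
  -- A and its bounds
  set A : ℝ := ∫ x : En n, (1 - Real.cos (inner ℝ x ξ)) * J x with hAdef
  have hA0 : 0 ≤ A := by
    apply integral_nonneg
    intro x
    have h1 : 0 ≤ 1 - Real.cos (inner ℝ x ξ : ℝ) := by linarith [Real.cos_le_one (inner ℝ x ξ : ℝ)]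
    exact mul_nonneg h1 (hJ0 x)
  have hpoint : ∀ x : En n, (1 - Real.cos (inner ℝ x ξ)) * J x ≤ ‖ξ‖^2 / 2 * ρ ε ‖x‖ := by
    intro x
    by_cases hx : x = 0
    · subst hx
      have : J (0 : En n) = 0 := by
        show ρ ε ‖(0 : En n)‖ / ‖(0 : En n)‖ ^ 2 = 0
        simp
      rw [this, mul_zero]
      have := h_nn ε hε ‖(0 : En n)‖
      positivity
    · have hnx : 0 < ‖x‖ := norm_pos_iff.2 hx
      set t : ℝ := (inner ℝ x ξ : ℝ) with htdef
      have h1 : 1 - Real.cos t ≤ t^2 / 2 := by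
        linarith [Real.one_sub_sq_div_two_le_cos (x := t)]
      have h2 : t^2 ≤ ‖x‖^2 * ‖ξ‖^2 := by
        have := abs_real_inner_le_norm x ξ
        nlinarith [abs_nonneg t, sq_abs t]
      have hrnn : 0 ≤ ρ ε ‖x‖ := h_nn ε hε _
      have hJx : J x = ρ ε ‖x‖ / ‖x‖^2 := rfl
      have h3 : (1 - Real.cos t) * J x ≤ (‖x‖^2 * ‖ξ‖^2 / 2) * (ρ ε ‖x‖ / ‖x‖^2) := by
        rw [hJx]
        apply mul_le_mul (by linarith) le_rfl (by positivity) (by nlinarith)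
      calc (1 - Real.cos t) * J x ≤ (‖x‖^2 * ‖ξ‖^2 / 2) * (ρ ε ‖x‖ / ‖x‖^2) := h3
        _ = ‖ξ‖^2 / 2 * ρ ε ‖x‖ := by field_simp
  have hA_le : A ≤ ‖ξ‖^2 / 2 * K := by
    calc A ≤ ∫ x : En n, ‖ξ‖^2 / 2 * ρ ε ‖x‖ :=
          integral_mono h1cosJ_int (hρnorm_int.const_mul _) hpoint
      _ = ‖ξ‖^2 / 2 * ∫ x : En n, ρ ε ‖x‖ := integral_const_mul _ _
      _ = ‖ξ‖^2 / 2 * K := by rw [hval]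
  -- Fourier transform values
  have hF0 : fourierF J 0 = ((∫ x : En n, J x : ℝ) : ℂ) := by
    rw [fourierF]
    have : ∀ x : En n, Complex.exp (-Complex.I * ((inner ℝ x (0 : En n) : ℝ) : ℂ)) * (J x : ℂ)
        = ((J x : ℝ) : ℂ) := by
      intro x
      rw [inner_zero_right]
      simp
    simp_rw [this]
    exact integral_ofReal
  have hkey : ∀ x : En n, Complex.exp (-Complex.I * ((inner ℝ x ξ : ℝ) : ℂ)) * (J x : ℂ)
      = ((Real.cos (inner ℝ x ξ) * J x : ℝ) : ℂ) - ((Real.sin (inner ℝ x ξ) * J x : ℝ) : ℂ) * Complex.I := by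
    intro x
    set t : ℝ := (inner ℝ x ξ : ℝ)
    have h1 : -Complex.I * (t : ℂ) = ((-t : ℝ) : ℂ) * Complex.I := by push_cast; ring
    rw [h1, Complex.exp_mul_I, ← Complex.ofReal_cos, ← Complex.ofReal_sin,
      Real.cos_neg, Real.sin_neg]
    push_cast
    ring
  have hFξ : fourierF J ξ = ((∫ x : En n, Real.cos (inner ℝ x ξ) * J x : ℝ) : ℂ)
      - ((∫ x : En n, Real.sin (inner ℝ x ξ) * J x : ℝ) : ℂ) * Complex.I := by
    have h4 : Integrable (fun x : En n => ((Real.cos (inner ℝ x ξ) * J x : ℝ) : ℂ)) volume :=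
      hcosJ_int.ofReal
    have h5 : Integrable (fun x : En n => ((Real.sin (inner ℝ x ξ) * J x : ℝ) : ℂ)) volume :=
      hsinJ_int.ofReal
    have h6 : ∫ x : En n, (((Real.cos (inner ℝ x ξ) * J x : ℝ) : ℂ)
          - ((Real.sin (inner ℝ x ξ) * J x : ℝ) : ℂ) * Complex.I)
        = (∫ x : En n, ((Real.cos (inner ℝ x ξ) * J x : ℝ) : ℂ))
          - ∫ x : En n, ((Real.sin (inner ℝ x ξ) * J x : ℝ) : ℂ) * Complex.I :=
      integral_sub h4 (h5.mul_const Complex.I)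
    have h7 : (∫ x : En n, ((Real.sin (inner ℝ x ξ) * J x : ℝ) : ℂ) * Complex.I)
        = (∫ x : En n, ((Real.sin (inner ℝ x ξ) * J x : ℝ) : ℂ)) * Complex.I :=
      integral_mul_const Complex.I _
    have h8 : (∫ x : En n, ((Real.cos (inner ℝ x ξ) * J x : ℝ) : ℂ))
        = ((∫ x : En n, Real.cos (inner ℝ x ξ) * J x : ℝ) : ℂ) := integral_ofReal
    have h9 : (∫ x : En n, ((Real.sin (inner ℝ x ξ) * J x : ℝ) : ℂ))
        = ((∫ x : En n, Real.sin (inner ℝ x ξ) * J x : ℝ) : ℂ) := integral_ofReal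
    rw [fourierF]
    simp_rw [hkey]
    rw [h6, h7, h8, h9]
  have hsin0 : (∫ x : En n, Real.sin (inner ℝ x ξ) * J x) = 0 := by
    have hneg : (∫ x : En n, Real.sin (inner ℝ (-x) ξ) * J (-x))
        = ∫ x : En n, Real.sin (inner ℝ x ξ) * J x :=
      integral_neg_eq_self (fun y : En n => Real.sin (inner ℝ y ξ) * J y) volume
    have hodd : (fun x : En n => Real.sin (inner ℝ (-x) ξ) * J (-x))
        = fun x : En n => -(Real.sin (inner ℝ x ξ) * J x) := by
      funext x
      rw [inner_neg_left, Real.sin_neg, hJeven x]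
      ring
    rw [hodd, integral_neg] at hneg
    linarith
  -- put everything together
  have hAsub : A = (∫ x : En n, J x) - ∫ x : En n, Real.cos (inner ℝ x ξ) * J x := by
    rw [hAdef, ← integral_sub hJint hcosJ_int]
    apply integral_congr_ae
    filter_upwards with x
    ring
  have hdiff : fourierF J 0 - fourierF J ξ - ((‖ξ‖ ^ 2 : ℝ) : ℂ) = ((A - ‖ξ‖^2 : ℝ) : ℂ) := by
    rw [hF0, hFξ, hsin0, hAsub]
    push_cast
    ring
  rw [hdiff, Complex.norm_real]
  have habs : |A - ‖ξ‖^2| ≤ A + ‖ξ‖^2 := by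
    rw [abs_le]
    constructor <;> nlinarith [sq_nonneg ‖ξ‖]
  calc |A - ‖ξ‖^2| ≤ A + ‖ξ‖^2 := habs
    _ ≤ ‖ξ‖^2 / 2 * K + ‖ξ‖^2 := by linarith
    _ ≤ (K / 2 + 1) * (1 + ‖ξ‖^2) := by nlinarith [sq_nonneg ‖ξ‖]
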